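/- Let X be a loopless graph on n vertices, μ the greatest Laplacian eigenvalue, and S an independent set of size s attaining equality in s = n(μ − d̄_S)/μ. If gcd(s, n) = 1, then μ = n and every vertex of S is adjacent to every vertex of V∖S (the induced bipartite subgraph between S and its complement is complete bipartite). -/

import Mathlib

open Matrix Finset

lemma myIsHermitian {n : ℕ} {M : Matrix (Fin n) (Fin n) ℝ} (h : M.IsSymm) :
    M.IsHermitian := by
  rw [Matrix.IsHermitian, Matrix.conjTranspose]
  ext i j; simpa using h.apply i j

lemma lapQuad {n : ℕ} (B : Matrix (Fin n) (Fin n) ℝ) (hsym : B.IsSymm)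
    (x : Fin n → ℝ) :
    x ⬝ᵥ (Matrix.diagonal (fun i => ∑ j, B i j) - B) *ᵥ x
      = (1/2) * ∑ i, ∑ j, B i j * (x i - x j)^2 := by
  have swap2 : ∑ i, ∑ j, B i j * x j ^ 2 = ∑ i, ∑ j, B i j * x i ^ 2 := by
    rw [Finset.sum_comm]
    exact Finset.sum_congr rfl fun j _ => Finset.sum_congr rfl fun i _ => by
      rw [hsym.apply]
  have e1 : x ⬝ᵥ (Matrix.diagonal (fun i => ∑ j, B i j) - B) *ᵥ x
      = (∑ i, ∑ j, B i j * x i ^ 2) - ∑ i, ∑ j, B i j * (x i * x j) := by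
    rw [Matrix.sub_mulVec, dotProduct_sub]
    congr 1
    · rw [dotProduct]
      refine Finset.sum_congr rfl fun i _ => ?_
      rw [Matrix.mulVec_diagonal, Finset.sum_mul, Finset.mul_sum]
      exact Finset.sum_congr rfl fun j _ => by ring
    · rw [dotProduct]
      refine Finset.sum_congr rfl fun i _ => ?_
      rw [Matrix.mulVec, dotProduct, Finset.mul_sum]
      exact Finset.sum_congr rfl fun j _ => by ring
  have e2 : (1/2) * ∑ i, ∑ j, B i j * (x i - x j)^2
      = (1/2) * (∑ i, ∑ j, B i j * x i ^ 2) + (1/2) * (∑ i, ∑ j, B i j * x j ^ 2)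
        - ∑ i, ∑ j, B i j * (x i * x j) := by
    rw [Finset.mul_sum, Finset.mul_sum, Finset.mul_sum]
    rw [← Finset.sum_add_distrib, ← Finset.sum_sub_distrib]
    refine Finset.sum_congr rfl fun i _ => ?_
    rw [Finset.mul_sum, Finset.mul_sum, Finset.mul_sum]
    rw [← Finset.sum_add_distrib, ← Finset.sum_sub_distrib]
    exact Finset.sum_congr rfl fun j _ => by ring
  rw [e1, e2]
  linarith [swap2]

lemma lapPSD {n : ℕ} (B : Matrix (Fin n) (Fin n) ℝ) (hsym : B.IsSymm)
    (hnn : ∀ i j, 0 ≤ B i j) :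
    (Matrix.diagonal (fun i => ∑ j, B i j) - B).PosSemidef := by
  refine Matrix.PosSemidef.of_dotProduct_mulVec_nonneg ?_ ?_
  · apply myIsHermitian
    apply Matrix.IsSymm.sub
    · exact Matrix.isSymm_diagonal _
    · exact hsym
  · intro x
    have hx : star x = x := by funext i; simp
    rw [hx, lapQuad B hsym]
    have : (0:ℝ) ≤ ∑ i, ∑ j, B i j * (x i - x j)^2 :=
      Finset.sum_nonneg fun i _ => Finset.sum_nonneg fun j _ =>
        mul_nonneg (hnn i j) (sq_nonneg _)
    linarith

lemma psdShift {n : ℕ} (L : Matrix (Fin n) (Fin n) ℝ) (hL : L.IsSymm) (μ : ℝ)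
    (hμmax : ∀ (ν : ℝ) (v : Fin n → ℝ), v ≠ 0 → L.mulVec v = ν • v → ν ≤ μ) :
    (μ • (1 : Matrix (Fin n) (Fin n) ℝ) - L).PosSemidef := by
  have hM : (μ • (1 : Matrix (Fin n) (Fin n) ℝ) - L).IsHermitian := by
    apply myIsHermitian
    exact Matrix.IsSymm.sub ((Matrix.isSymm_one).smul μ) hL
  refine hM.posSemidef_iff_eigenvalues_nonneg.mpr (Pi.le_def.mpr ?_)
  intro k
  set u : Fin n → ℝ := ⇑(hM.eigenvectorBasis k) with hu
  have hunz : u ≠ 0 := by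
    intro h0
    have h1 := hM.eigenvectorBasis.orthonormal.1 k
    rw [EuclideanSpace.norm_eq] at h1
    have h2 : ∀ i, hM.eigenvectorBasis k i = 0 := fun i => congrFun h0 i
    simp [h2] at h1
  have heig := hM.mulVec_eigenvectorBasis k
  rw [Matrix.sub_mulVec, Matrix.smul_mulVec, Matrix.one_mulVec] at heig
  have : L.mulVec u = (μ - hM.eigenvalues k) • u := by
    rw [sub_smul]
    rw [show L *ᵥ u = μ • u - (μ • u - L *ᵥ u) by ring_nf, heig]
  have := hμmax _ u hunz this
  linarith [show (0 : Fin n → ℝ) k = 0 from rfl]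

/-- Equality in the Laplacian bound with `gcd(s,n) = 1` forces `μ = n` and the bipartite
subgraph between `S` and its complement to be complete bipartite. -/
theorem stmt9 (n : ℕ) (hn : 0 < n)
    (A : Matrix (Fin n) (Fin n) ℝ) (hsym : A.IsSymm)
    (h01 : ∀ i j, A i j = 0 ∨ A i j = 1) (hloop : ∀ i, A i i = 0)
    (L : Matrix (Fin n) (Fin n) ℝ)
    (hL : L = Matrix.diagonal (fun i => ∑ j, A i j) - A)
    (μ : ℝ) (hμpos : 0 < μ)
    (hμeig : ∃ v : Fin n → ℝ, v ≠ 0 ∧ L.mulVec v = μ • v)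
    (hμmax : ∀ (ν : ℝ) (v : Fin n → ℝ), v ≠ 0 → L.mulVec v = ν • v → ν ≤ μ)
    (S : Finset (Fin n)) (hSne : S.Nonempty)
    (hind : ∀ i ∈ S, ∀ j ∈ S, i ≠ j → A i j = 0)
    (s : ℕ) (hs : s = S.card)
    (dbar : ℝ) (hdbar : dbar = (∑ i ∈ S, ∑ j, A i j) / s)
    (heq : (s : ℝ) = n * (μ - dbar) / μ)
    (hgcd : Nat.gcd s n = 1) :
    μ = n ∧ ∀ i ∈ S, ∀ j ∈ Sᶜ, A i j = 1 := by
  classical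
  have hAnn : ∀ i j, (0:ℝ) ≤ A i j := fun i j => by rcases h01 i j with h | h <;> simp [h]
  have hA1 : ∀ i j, A i j ≤ 1 := fun i j => by rcases h01 i j with h | h <;> simp [h]
  have hLsym : L.IsSymm := by
    rw [hL]; exact (Matrix.isSymm_diagonal _).sub hsym
  have hspos : 0 < s := by rw [hs]; exact Finset.card_pos.mpr hSne
  have hsleν : s ≤ n := by rw [hs]; simpa using Finset.card_le_card (Finset.subset_univ S)
  have hTcard : ((Sᶜ : Finset (Fin n)).card : ℝ) = (n:ℝ) - s := by
    have h : (Sᶜ : Finset (Fin n)).card = n - s := by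
      rw [Finset.card_compl, Fintype.card_fin, hs]
    rw [h, Nat.cast_sub hsleν]
  -- zero row sums within S
  have hrowS : ∀ i ∈ S, ∑ j ∈ S, A i j = 0 := by
    intro i hi
    apply Finset.sum_eq_zero
    intro j hj
    by_cases hij : i = j
    · rw [hij]; exact hloop j
    · exact hind i hi j hj hij
  -- the test vector
  set v : Fin n → ℝ := fun i => if i ∈ S then ((n:ℝ) - s) else -(s:ℝ) with hv
  -- pointwise formula for L *ᵥ v
  have hLv : ∀ i, (L *ᵥ v) i
      = (∑ j, A i j) * (v i + s) - (n:ℝ) * ∑ j ∈ S, A i j := by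
    intro i
    rw [hL, Matrix.sub_mulVec]
    have h1 : ((Matrix.diagonal (fun i => ∑ j, A i j)) *ᵥ v) i = (∑ j, A i j) * v i :=
      Matrix.mulVec_diagonal _ _ _
    have h2 : (A *ᵥ v) i = ((n:ℝ) - s) * (∑ j ∈ S, A i j) - s * ∑ j ∈ Sᶜ, A i j := by
      show (∑ j, A i j * v j) = _
      rw [← Finset.sum_add_sum_compl S (fun j => A i j * v j)]
      congr 1
      · rw [Finset.mul_sum]
        exact Finset.sum_congr rfl fun j hj => by rw [hv]; simp [hj]; ring
      · calc ∑ j ∈ Sᶜ, A i j * v j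
            = ∑ j ∈ Sᶜ, -((s:ℝ) * A i j) := by
              refine Finset.sum_congr rfl fun j hj => ?_
              rw [hv]; simp [Finset.mem_compl.mp hj]; ring
          _ = -((s:ℝ) * ∑ j ∈ Sᶜ, A i j) := by
              rw [Finset.sum_neg_distrib, Finset.mul_sum]
    have hcompl : ∑ j ∈ Sᶜ, A i j = (∑ j, A i j) - ∑ j ∈ S, A i j := by
      rw [eq_sub_iff_add_eq, add_comm, Finset.sum_add_sum_compl]
    rw [Pi.sub_apply, h1, h2, hcompl]
    ring
  -- μ ≤ n
  obtain ⟨w, hw0, hw⟩ := hμeig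
  have hwwpos : 0 < w ⬝ᵥ w := by
    have hnn : 0 ≤ w ⬝ᵥ w := Finset.sum_nonneg fun i _ => mul_self_nonneg _
    refine lt_of_le_of_ne hnn fun h => hw0 ?_
    exact dotProduct_self_eq_zero.mp h.symm
  have hcolL : ∀ j, ∑ i, L i j = 0 := by
    intro j
    rw [hL]
    simp only [Matrix.sub_apply, Matrix.diagonal_apply]
    rw [Finset.sum_sub_distrib]
    have h1 : ∑ i, (if i = j then (∑ k, A i k) else 0) = ∑ k, A j k := by
      rw [Finset.sum_ite_eq' Finset.univ j (fun i => ∑ k, A i k)]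
      simp
    have h2 : ∑ i, A i j = ∑ k, A j k := Finset.sum_congr rfl fun i _ => hsym.apply j i
    rw [h1, h2, sub_self]
  have hsumw : ∑ i, w i = 0 := by
    have h1 : ∑ i, (L *ᵥ w) i = μ * ∑ i, w i := by
      rw [hw]; simp [Finset.mul_sum]
    have h2 : ∑ i, (L *ᵥ w) i = 0 := by
      simp only [Matrix.mulVec, dotProduct]
      rw [Finset.sum_comm]
      have : ∀ j, ∑ i, L i j * w j = 0 := by
        intro j; rw [← Finset.sum_mul, hcolL j, zero_mul]
      simp [this]
    have h3 : μ * ∑ i, w i = 0 := by rw [← h1, h2]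
    rcases mul_eq_zero.mp h3 with h | h
    · exact absurd h hμpos.ne'
    · exact h
  set B' : Matrix (Fin n) (Fin n) ℝ := Matrix.of (fun i j => if i = j then 0 else 1 - A i j)
    with hB'
  have hB'sym : B'.IsSymm := by
    rw [Matrix.IsSymm]
    ext i j
    rw [Matrix.transpose_apply]
    simp only [hB', Matrix.of_apply]
    by_cases h : i = j
    · subst h; rfl
    · rw [if_neg h, if_neg (Ne.symm h), hsym.apply]
  have hB'nn : ∀ i j, 0 ≤ B' i j := by
    intro i j
    simp only [hB', Matrix.of_apply]
    split
    · exact le_refl 0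
    · linarith [hA1 i j]
  have hL'psd := lapPSD B' hB'sym hB'nn
  have hB'row : ∀ i, ∑ j, B' i j = (n:ℝ) - (∑ j, A i j) - 1 := by
    intro i
    have hterm : ∀ j, B' i j = (1 - A i j) - (if j = i then (1 - A i j) else 0) := by
      intro j
      simp only [hB', Matrix.of_apply]
      by_cases h : i = j
      · subst h; simp
      · rw [if_neg h, if_neg (Ne.symm h)]; ring
    rw [Finset.sum_congr rfl fun j _ => hterm j, Finset.sum_sub_distrib]
    rw [Finset.sum_ite_eq' Finset.univ i (fun j => 1 - A i j)]
    rw [Finset.sum_sub_distrib, Finset.sum_const, Finset.card_univ, Fintype.card_fin]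
    simp [hloop i]
  have hLL' : L + (Matrix.diagonal (fun i => ∑ j, B' i j) - B')
      = (n:ℝ) • (1 : Matrix (Fin n) (Fin n) ℝ) - Matrix.of (fun _ _ => (1:ℝ)) := by
    ext i j
    by_cases hij : i = j
    · subst hij
      simp only [hL, Matrix.add_apply, Matrix.sub_apply, Matrix.diagonal_apply_eq,
        Matrix.smul_apply, Matrix.one_apply_eq, Matrix.of_apply, smul_eq_mul, hB'row i,
        hloop i]
      simp [hB']
      ring
    · simp only [hL, Matrix.add_apply, Matrix.sub_apply, Matrix.diagonal_apply_ne _ hij,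
        Matrix.smul_apply, Matrix.one_apply_ne hij, Matrix.of_apply, smul_eq_mul, hB']
      simp only [Matrix.of_apply, if_neg hij]
      ring
  have hμlen : μ ≤ (n:ℝ) := by
    have hQ' : 0 ≤ w ⬝ᵥ ((Matrix.diagonal (fun i => ∑ j, B' i j) - B') *ᵥ w) := by
      have h := hL'psd.dotProduct_mulVec_nonneg w
      rwa [show star w = w from funext fun i => rfl] at h
    have hJw : (Matrix.of (fun _ _ => (1:ℝ)) : Matrix (Fin n) (Fin n) ℝ) *ᵥ w = 0 := by
      funext i
      show ∑ j, (1:ℝ) * w j = 0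
      simp [hsumw]
    have hcomb : w ⬝ᵥ (L *ᵥ w) + w ⬝ᵥ ((Matrix.diagonal (fun i => ∑ j, B' i j) - B') *ᵥ w)
        = (n:ℝ) * (w ⬝ᵥ w) := by
      rw [← dotProduct_add, ← Matrix.add_mulVec, hLL', Matrix.sub_mulVec, hJw, sub_zero,
        Matrix.smul_mulVec, Matrix.one_mulVec, dotProduct_smul]
      simp [smul_eq_mul]
    have hLww : w ⬝ᵥ (L *ᵥ w) = μ * (w ⬝ᵥ w) := by
      rw [hw, dotProduct_smul]; simp [smul_eq_mul]
    nlinarith [hwwpos]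
  -- algebraic identities
  have hE : ∑ i ∈ S, ∑ j, A i j = (s:ℝ) * dbar := by
    rw [hdbar]
    field_simp
  have hcross : ∑ i ∈ Sᶜ, ∑ j ∈ S, A i j = ∑ i ∈ S, ∑ j, A i j := by
    rw [Finset.sum_comm (f := fun i j => A i j)]
    refine Finset.sum_congr rfl fun j hj => ?_
    have h1 : ∑ i ∈ Sᶜ, A i j = ∑ i ∈ Sᶜ, A j i :=
      Finset.sum_congr rfl fun i _ => hsym.apply j i
    rw [h1]
    have h2 : ∑ i ∈ S, A j i + ∑ i ∈ Sᶜ, A j i = ∑ i, A j i :=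
      Finset.sum_add_sum_compl S _
    have h3 := hrowS j hj
    linarith
  have hQv : v ⬝ᵥ (L *ᵥ v) = (n:ℝ)^2 * ∑ i ∈ S, ∑ j, A i j := by
    rw [dotProduct, ← Finset.sum_add_sum_compl S]
    have hSpart : ∑ i ∈ S, v i * (L *ᵥ v) i = (n:ℝ)*((n:ℝ)-s) * ∑ i ∈ S, ∑ j, A i j := by
      rw [Finset.mul_sum]
      refine Finset.sum_congr rfl fun i hi => ?_
      rw [hLv i, hrowS i hi]
      simp only [hv, if_pos hi]
      ring
    have hTpart : ∑ i ∈ Sᶜ, v i * (L *ᵥ v) i = (n:ℝ)*(s:ℝ) * ∑ i ∈ S, ∑ j, A i j := by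
      rw [← hcross, Finset.mul_sum]
      refine Finset.sum_congr rfl fun i hi => ?_
      rw [hLv i]
      simp only [hv, if_neg (Finset.mem_compl.mp hi)]
      ring
    rw [hSpart, hTpart]
    ring
  have hvv : v ⬝ᵥ v = (s:ℝ) * ((n:ℝ) - s) * n := by
    rw [dotProduct, ← Finset.sum_add_sum_compl S]
    have hSpart : ∑ i ∈ S, v i * v i = (s:ℝ) * ((n:ℝ)-s)^2 := by
      calc ∑ i ∈ S, v i * v i = ∑ i ∈ S, ((n:ℝ)-s)^2 :=
            Finset.sum_congr rfl fun i hi => by simp only [hv, if_pos hi]; ring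
        _ = (S.card : ℝ) * ((n:ℝ)-s)^2 := by rw [Finset.sum_const, nsmul_eq_mul]
        _ = (s:ℝ) * ((n:ℝ)-s)^2 := by rw [hs]
    have hTpart : ∑ i ∈ Sᶜ, v i * v i = ((n:ℝ)-s) * (s:ℝ)^2 := by
      calc ∑ i ∈ Sᶜ, v i * v i = ∑ i ∈ Sᶜ, ((s:ℝ))^2 :=
            Finset.sum_congr rfl fun i hi => by
              simp only [hv, if_neg (Finset.mem_compl.mp hi)]; ring
        _ = ((Sᶜ : Finset (Fin n)).card : ℝ) * (s:ℝ)^2 := by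
              rw [Finset.sum_const, nsmul_eq_mul]
        _ = ((n:ℝ)-s) * (s:ℝ)^2 := by rw [hTcard]
    rw [hSpart, hTpart]
    ring
  have hμne : μ ≠ 0 := hμpos.ne'
  have hndbar : (n:ℝ) * dbar = μ * ((n:ℝ) - s) := by
    field_simp at heq
    nlinarith [heq]
  have hMpsd := psdShift L hLsym μ hμmax
  have hzero : v ⬝ᵥ ((μ • (1 : Matrix (Fin n) (Fin n) ℝ) - L) *ᵥ v) = 0 := by
    rw [Matrix.sub_mulVec, dotProduct_sub, Matrix.smul_mulVec, Matrix.one_mulVec,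
      dotProduct_smul, smul_eq_mul, hQv, hvv, hE]
    linear_combination (-(s:ℝ)*(n:ℝ)) * hndbar
  have hveig : L *ᵥ v = μ • v := by
    have h := (hMpsd.dotProduct_mulVec_zero_iff v).mp
      (by rwa [show star v = v from funext fun i => rfl])
    rw [Matrix.sub_mulVec, Matrix.smul_mulVec, Matrix.one_mulVec, sub_eq_zero] at h
    exact h.symm
  have hSdeg : ∀ i ∈ S, (n:ℝ) * ∑ j, A i j = μ * ((n:ℝ) - s) := by
    intro i hi
    have h := congrFun hveig i
    rw [hLv i, hrowS i hi] at h
    simp only [Pi.smul_apply, smul_eq_mul, hv, if_pos hi] at h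
    linarith [h]
  have hTa : ∀ j, j ∉ S → (n:ℝ) * ∑ k ∈ S, A j k = μ * s := by
    intro j hj
    have h := congrFun hveig j
    rw [hLv j] at h
    simp only [Pi.smul_apply, smul_eq_mul, hv, if_neg hj] at h
    linarith [h]
  by_cases hT : (Sᶜ : Finset (Fin n)).Nonempty
  · obtain ⟨j0, hj0⟩ := hT
    obtain ⟨i0, hi0⟩ := hSne
    have hj0S : j0 ∉ S := Finset.mem_compl.mp hj0
    set Na := (S.filter fun k => A j0 k = 1).card with hNa
    have hNaR : (Na:ℝ) = ∑ k ∈ S, A j0 k := by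
      rw [← Finset.sum_filter_add_sum_filter_not S (fun k => A j0 k = 1)]
      have hz : ∑ k ∈ S.filter (fun k => ¬ A j0 k = 1), A j0 k = 0 :=
        Finset.sum_eq_zero fun k hk => by
          rcases h01 j0 k with h | h
          · exact h
          · exact absurd h (Finset.mem_filter.mp hk).2
      have ho : ∑ k ∈ S.filter (fun k => A j0 k = 1), A j0 k
          = ((S.filter fun k => A j0 k = 1).card : ℝ) := by
        rw [Finset.sum_congr rfl fun k hk => (Finset.mem_filter.mp hk).2,
          Finset.sum_const, nsmul_eq_mul, mul_one]
      rw [hz, ho, add_zero, hNa]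
    set D := (Finset.univ.filter fun k => A i0 k = 1).card with hD
    have hDR : (D:ℝ) = ∑ k, A i0 k := by
      rw [← Finset.sum_filter_add_sum_filter_not Finset.univ (fun k => A i0 k = 1)]
      have hz : ∑ k ∈ Finset.univ.filter (fun k => ¬ A i0 k = 1), A i0 k = 0 :=
        Finset.sum_eq_zero fun k hk => by
          rcases h01 i0 k with h | h
          · exact h
          · exact absurd h (Finset.mem_filter.mp hk).2
      have ho : ∑ k ∈ Finset.univ.filter (fun k => A i0 k = 1), A i0 k
          = ((Finset.univ.filter fun k => A i0 k = 1).card : ℝ) := by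
        rw [Finset.sum_congr rfl fun k hk => (Finset.mem_filter.mp hk).2,
          Finset.sum_const, nsmul_eq_mul, mul_one]
      rw [hz, ho, add_zero, hD]
    have e1 : (n:ℝ) * Na = μ * s := by rw [hNaR]; exact hTa j0 hj0S
    have e2 : (n:ℝ) * D = μ * ((n:ℝ) - s) := by rw [hDR]; exact hSdeg i0 hi0
    have hnR : (0:ℝ) < n := by exact_mod_cast hn
    have hμval : μ = ((Na + D : ℕ) : ℝ) := by
      have h1 : (n:ℝ) * ((Na:ℝ) + D) = (n:ℝ) * μ := by linear_combination e1 + e2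
      have h2 := mul_left_cancel₀ hnR.ne' h1
      push_cast
      linarith
    have hpc : μ = (Na:ℝ) + D := by rw [hμval]; push_cast; ring
    have eNat : n * Na = (Na + D) * s := by
      have h : ((n * Na : ℕ) : ℝ) = (((Na + D) * s : ℕ) : ℝ) := by
        push_cast
        linear_combination e1 + (s:ℝ) * hpc
      exact_mod_cast h
    have hdvd : n ∣ (Na + D) * s := ⟨Na, eNat.symm⟩
    have hcop : Nat.Coprime n s := Nat.Coprime.symm hgcd
    have hdvd2 : n ∣ (Na + D) := hcop.dvd_of_dvd_mul_right hdvd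
    have hmpos : 0 < Na + D := by
      rcases Nat.eq_zero_or_pos (Na + D) with h | h
      · rw [h] at hμval; simp at hμval; linarith [hμpos]
      · exact h
    have hmlen : Na + D ≤ n := by
      have h : ((Na + D : ℕ):ℝ) ≤ (n:ℝ) := by rw [← hμval]; exact hμlen
      exact_mod_cast h
    have hmn : Na + D = n := Nat.le_antisymm hmlen (Nat.le_of_dvd hmpos hdvd2)
    have hμn : μ = (n:ℝ) := by rw [hμval, hmn]
    refine ⟨hμn, ?_⟩
    intro i hi j hj
    have hjS : j ∉ S := Finset.mem_compl.mp hj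
    have hTj := hTa j hjS
    rw [hμn] at hTj
    have hsum : ∑ k ∈ S, A j k = (s:ℝ) :=
      mul_left_cancel₀ hnR.ne' hTj
    have hzz : ∑ k ∈ S, (1 - A j k) = 0 := by
      rw [Finset.sum_sub_distrib, Finset.sum_const, nsmul_eq_mul, mul_one, hsum, hs, sub_self]
    have hk := (Finset.sum_eq_zero_iff_of_nonneg
      (fun k _ => by linarith [hA1 j k])).mp hzz i hi
    have hji : A j i = 1 := by linarith
    rw [← hsym.apply i j]
    exact hji
  · exfalso
    have hSuniv : S = Finset.univ := by
      rw [← Finset.compl_eq_empty_iff]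
      exact Finset.not_nonempty_iff_eq_empty.mp hT
    have hA0 : ∀ i j, A i j = 0 := by
      intro i j
      by_cases hij : i = j
      · rw [hij]; exact hloop j
      · exact hind i (hSuniv ▸ Finset.mem_univ i) j (hSuniv ▸ Finset.mem_univ j) hij
    have hL0 : L = 0 := by
      rw [hL]
      ext i j
      simp [hA0, Matrix.diagonal_apply]
    rw [hL0, Matrix.zero_mulVec] at hw
    have : w = 0 := by
      rcases smul_eq_zero.mp hw.symm with h | h
      · exact absurd h hμne
      · exact h
    exact hw0 this
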